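/- Let C = MDS(n,d) ≤ G^n be an additive MDS code of minimum distance d over a finite abelian group G. Then for any subset γ ⊆ {1,...,n} of cardinality d, there are exactly |G| − 1 codewords of C whose support is exactly γ. Consequently C has exactly C(n,d)·(|G| − 1) codewords of weight d. -/

import Mathlib

open Finset

section Aux
variable {G : Type*} [AddCommGroup G] [Fintype G] [DecidableEq G]
variable {n d : ℕ} {C : AddSubgroup (Fin n → G)}

omit [Fintype G] in
lemma mds_aux_zero (hmin : IsLeast {w | ∃ c ∈ C, c ≠ 0 ∧ hammingNorm c = w} d)
    (hd : 1 ≤ d) (hdn : d ≤ n)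
    (S : Finset (Fin n)) (hS : n + 1 - d ≤ S.card)
    {c : Fin n → G} (hc : c ∈ C) (h0 : ∀ j ∈ S, c j = 0) : c = 0 := by
  by_contra h
  have h1 : d ≤ hammingNorm c := hmin.2 ⟨c, hc, h, rfl⟩
  have h2 : hammingNorm c ≤ Sᶜ.card := by
    apply Finset.card_le_card
    intro j hj
    simp only [mem_filter, mem_univ, true_and] at hj
    simp only [mem_compl]
    intro hjS
    exact hj (h0 j hjS)
  rw [card_compl, Fintype.card_fin] at h2
  omega

lemma mds_aux_surj (hcard : Nat.card C = Fintype.card G ^ (n + 1 - d))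
    (hmin : IsLeast {w | ∃ c ∈ C, c ≠ 0 ∧ hammingNorm c = w} d)
    (hd : 1 ≤ d) (hdn : d ≤ n)
    (S : Finset (Fin n)) (hS : S.card = n + 1 - d) (f : Fin n → G) :
    ∃ c ∈ C, ∀ j ∈ S, c j = f j := by
  haveI : Fintype C := Fintype.ofFinite _
  set φ : C → (S → G) := fun c j => (c : Fin n → G) j with hφ
  have hinj : Function.Injective φ := by
    intro c c' hcc
    have hz : ((c : Fin n → G) - c') = 0 := by
      apply mds_aux_zero hmin hd hdn S hS.ge (sub_mem c.2 c'.2)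
      intro j hj
      have := congrFun hcc ⟨j, hj⟩
      simp only [φ] at this
      simp [this]
    ext j
    have := congrFun hz j
    simpa [sub_eq_zero] using this
  have hbij : Function.Bijective φ := by
    rw [Fintype.bijective_iff_injective_and_card]
    refine ⟨hinj, ?_⟩
    rw [← Nat.card_eq_fintype_card, hcard, Fintype.card_fun, Fintype.card_coe, hS]
  obtain ⟨c, hc⟩ := hbij.2 (fun j => f j)
  exact ⟨c, c.2, fun j hj => congrFun hc ⟨j, hj⟩⟩

lemma mds_aux_support (hcard : Nat.card C = Fintype.card G ^ (n + 1 - d))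
    (hmin : IsLeast {w | ∃ c ∈ C, c ≠ 0 ∧ hammingNorm c = w} d)
    (hd : 1 ≤ d) (hdn : d ≤ n)
    (γ : Finset (Fin n)) (hγ : γ.card = d) :
    Nat.card {c : Fin n → G // c ∈ C ∧ {j | c j ≠ 0} = (γ : Set (Fin n))}
      = Fintype.card G - 1 := by
  obtain ⟨i, hi⟩ : γ.Nonempty := Finset.card_pos.mp (by omega)
  have hiγc : i ∉ γᶜ := by simp [hi]
  set S : Finset (Fin n) := insert i γᶜ with hSdef
  have hScard : S.card = n + 1 - d := by
    rw [hSdef, Finset.card_insert_of_notMem hiγc, card_compl, Fintype.card_fin, hγ]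
    omega
  -- membership helpers
  have hmemS : ∀ {c : Fin n → G}, c ∈ C → (∀ j ∈ S, c j = 0) → c = 0 :=
    fun hc h0 => mds_aux_zero hmin hd hdn S hScard.ge hc h0
  set F : {c : Fin n → G // c ∈ C ∧ {j | c j ≠ 0} = (γ : Set (Fin n))} → {g : G // g ≠ 0} :=
    fun c => ⟨c.1 i, by
      have := c.2.2
      have hi' : i ∈ {j | c.1 j ≠ 0} := by rw [this]; exact_mod_cast hi
      exact hi'⟩ with hF
  have hFinj : Function.Injective F := by
    intro c c' hcc
    have hval : c.1 i = c'.1 i := congrArg Subtype.val hcc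
    have hz : (c.1 - c'.1) = 0 := by
      apply hmemS (sub_mem c.2.1 c'.2.1)
      intro j hj
      rcases Finset.mem_insert.mp hj with rfl | hj
      · simp [hval]
      · have h1 : c.1 j = 0 := by
          by_contra h
          have : j ∈ {k | c.1 k ≠ 0} := h
          rw [c.2.2] at this
          exact (Finset.mem_compl.mp hj) (by exact_mod_cast this)
        have h2 : c'.1 j = 0 := by
          by_contra h
          have : j ∈ {k | c'.1 k ≠ 0} := h
          rw [c'.2.2] at this
          exact (Finset.mem_compl.mp hj) (by exact_mod_cast this)
        simp [h1, h2]
    ext j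
    have := congrFun hz j
    simpa [sub_eq_zero] using this
  have hFsurj : Function.Surjective F := by
    rintro ⟨g, hg⟩
    obtain ⟨c, hcC, hcS⟩ := mds_aux_surj hcard hmin hd hdn S hScard
      (fun j => if j = i then g else 0)
    have hci : c i = g := by simpa using hcS i (Finset.mem_insert_self i γᶜ)
    have hcz : ∀ j ∈ γᶜ, c j = 0 := by
      intro j hj
      have hji : j ≠ i := fun h => (h ▸ hj : i ∈ γᶜ) |> hiγc
      simpa [hji] using hcS j (Finset.mem_insert_of_mem hj)
    have hsub : {j | c j ≠ 0} ⊆ (γ : Set (Fin n)) := by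
      intro j hj
      by_contra h
      exact hj (hcz j (Finset.mem_compl.mpr (by exact_mod_cast h)))
    have hne : c ≠ 0 := fun h => hg (by rw [← hci, h]; rfl)
    have hle : hammingNorm c ≤ d := by
      calc hammingNorm c ≤ γ.card := by
            apply Finset.card_le_card
            intro j hj
            simp only [mem_filter, mem_univ, true_and] at hj
            exact_mod_cast hsub hj
        _ = d := hγ
    have hge : d ≤ hammingNorm c := hmin.2 ⟨c, hcC, hne, rfl⟩
    have hsupp : {j | c j ≠ 0} = (γ : Set (Fin n)) := by
      have h1 : (univ.filter fun j => c j ≠ 0) ⊆ γ := by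
        intro j hj
        simp only [mem_filter, mem_univ, true_and] at hj
        exact_mod_cast hsub hj
      have hnorm : (univ.filter fun j => c j ≠ 0).card = hammingNorm c := by
        simp [hammingNorm, Finset.filter_ne']
      have h2 : (univ.filter fun j => c j ≠ 0) = γ :=
        Finset.eq_of_subset_of_card_le h1 (by rw [hγ, hnorm]; exact hge)
      rw [← h2]
      ext j; simp
    exact ⟨⟨c, hcC, hsupp⟩, Subtype.ext hci⟩
  rw [Nat.card_congr (Equiv.ofBijective F ⟨hFinj, hFsurj⟩), Nat.card_eq_fintype_card]
  simp [Fintype.card_subtype_compl]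

end Aux

theorem MDS_words_of_minimal_weight {G : Type*} [AddCommGroup G] [Fintype G] [DecidableEq G]
    [Nontrivial G] (n d : ℕ)
    (C : AddSubgroup (Fin n → G))
    (hcard : Nat.card C = Fintype.card G ^ (n + 1 - d))
    (hmin : IsLeast {w | ∃ c ∈ C, c ≠ 0 ∧ hammingNorm c = w} d)
    (γ : Finset (Fin n)) (hγ : γ.card = d) :
    Nat.card {c : Fin n → G // c ∈ C ∧ {j | c j ≠ 0} = (γ : Set (Fin n))}
      = Fintype.card G - 1 ∧
    Nat.card {c : Fin n → G // c ∈ C ∧ hammingNorm c = d}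
      = n.choose d * (Fintype.card G - 1) := by
  classical
  have hd : 1 ≤ d := by
    obtain ⟨c, hc, hne, hw⟩ := hmin.1
    have := hammingNorm_pos_iff.mpr hne
    omega
  have hdn : d ≤ n := by
    have := Finset.card_le_univ γ
    rw [hγ, Fintype.card_fin] at this
    exact this
  refine ⟨mds_aux_support hcard hmin hd hdn γ hγ, ?_⟩
  -- part 2
  have key : ∀ γ' : Finset (Fin n), γ'.card = d →
      (univ.filter fun c : Fin n → G => c ∈ C ∧ (univ.filter fun j => c j ≠ 0) = γ').card
        = Fintype.card G - 1 := by
    intro γ' hγ'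
    have := mds_aux_support hcard hmin hd hdn γ' hγ'
    rw [Nat.card_eq_fintype_card, Fintype.card_subtype] at this
    rw [← this]
    congr 1
    ext c
    simp only [mem_filter, mem_univ, true_and, and_congr_right_iff]
    intro _
    constructor
    · intro h; rw [← h]; ext j; simp
    · intro h
      rw [← Finset.coe_inj]
      rw [← h]; ext j; simp
  rw [Nat.card_eq_fintype_card, Fintype.card_subtype]
  have hsplit : (univ.filter fun c : Fin n → G => c ∈ C ∧ hammingNorm c = d)
      = (univ.powersetCard d).biUnion
          (fun γ' => univ.filter fun c : Fin n → G => c ∈ C ∧ (univ.filter fun j => c j ≠ 0) = γ') := by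
    ext c
    simp only [mem_biUnion, mem_filter, mem_univ, true_and, mem_powersetCard_univ]
    constructor
    · rintro ⟨hc, hw⟩
      exact ⟨univ.filter fun j => c j ≠ 0, hw, hc, rfl⟩
    · rintro ⟨γ', hγ', hc, rfl⟩
      exact ⟨hc, hγ'⟩
  rw [hsplit, Finset.card_biUnion]
  · rw [Finset.sum_congr rfl (fun γ' hγ' => key γ' (mem_powersetCard_univ.mp hγ'))]
    rw [Finset.sum_const, card_powersetCard, Finset.card_univ, Fintype.card_fin, smul_eq_mul]
  · intro γ₁ h1 γ₂ h2 hne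
    rw [Function.onFun, Finset.disjoint_left]
    intro c hc1 hc2
    simp only [mem_filter, mem_univ, true_and] at hc1 hc2
    exact hne (by rw [← hc1.2, ← hc2.2])
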